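/- For every positive integer D, the number of quadruples (a,b,c,d) of integers with b ≥ 1, c ≥ 1, b + c < D, a > c, d > b, and ad = D + bc equals ν₂(D). -/

import Mathlib

/-- `nuTwo D` is the number of partitions of `D` using exactly two distinct part sizes. -/
def nuTwo (D : ℕ) : ℕ :=
  Finset.card (Finset.univ.filter (fun p : Nat.Partition D => p.parts.toFinset.card = 2))


def NS (D : ℕ) : Set (ℕ × ℕ × ℕ × ℕ) :=
  {r | 1 ≤ r.1 ∧ 1 ≤ r.2.1 ∧ r.2.2.2 < r.2.2.1 ∧ 1 ≤ r.2.2.2 ∧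
    r.1 * r.2.2.1 + r.2.1 * r.2.2.2 = D}

def QS (D : ℕ) : Set (ℤ × ℤ × ℤ × ℤ) :=
  {q | 1 ≤ q.2.1 ∧ 1 ≤ q.2.2.1 ∧ q.2.1 + q.2.2.1 < D ∧ q.1 > q.2.2.1 ∧ q.2.2.2 > q.2.1 ∧
    q.1 * q.2.2.2 = D + q.2.1 * q.2.2.1}

lemma ntoq_mem (D : ℕ) (m n s t : ℕ) (h : (m, n, s, t) ∈ NS D) :
    (((m : ℤ) + n, (s : ℤ) - t, (n : ℤ), (s : ℤ))) ∈ QS D := by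
  obtain ⟨hm, hn, hts, ht, hsum⟩ := h
  simp only [NS, Set.mem_setOf_eq] at *
  simp only [QS, Set.mem_setOf_eq]
  have hD : (D : ℤ) = m * s + n * t := by exact_mod_cast hsum.symm
  have h1 : (1:ℤ) ≤ m := by exact_mod_cast hm
  have h2 : (1:ℤ) ≤ n := by exact_mod_cast hn
  have h3 : (t:ℤ) < s := by exact_mod_cast hts
  have h4 : (1:ℤ) ≤ t := by exact_mod_cast ht
  refine ⟨by omega, by omega, by nlinarith, by omega, by omega, by rw [hD]; ring⟩

lemma qton_mem (D : ℕ) (a b c d : ℤ) (h : (a, b, c, d) ∈ QS D) :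
    ((a - c).toNat, c.toNat, d.toNat, (d - b).toNat) ∈ NS D := by
  obtain ⟨hb, hc, hbc, hac, hdb, heq⟩ := h
  simp only [QS, Set.mem_setOf_eq] at *
  simp only [NS, Set.mem_setOf_eq]
  have hd : (0:ℤ) < d := by omega
  refine ⟨by omega, by omega, by omega, by omega, ?_⟩
  have : ((a - c).toNat * d.toNat + c.toNat * (d - b).toNat : ℤ) = D := by
    rw [Int.toNat_of_nonneg (by omega), Int.toNat_of_nonneg (by omega),
      Int.toNat_of_nonneg (by omega), Int.toNat_of_nonneg (by omega)]
    nlinarith [heq]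
  exact_mod_cast this

noncomputable def nqEquiv (D : ℕ) : NS D ≃ QS D where
  toFun := fun ⟨⟨m, n, s, t⟩, h⟩ => ⟨((m : ℤ) + n, (s : ℤ) - t, (n : ℤ), (s : ℤ)), ntoq_mem D m n s t h⟩
  invFun := fun ⟨⟨a, b, c, d⟩, h⟩ => ⟨((a - c).toNat, c.toNat, d.toNat, (d - b).toNat), qton_mem D a b c d h⟩
  left_inv := by
    rintro ⟨⟨m, n, s, t⟩, hm, hn, hts, ht, hsum⟩
    simp only [Subtype.mk.injEq, Prod.mk.injEq]
    refine Subtype.ext (Prod.ext ?_ (Prod.ext ?_ (Prod.ext ?_ ?_))) <;> dsimp only <;> omega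
  right_inv := by
    rintro ⟨⟨a, b, c, d⟩, hb, hc, hbc, hac, hdb, heq⟩
    dsimp only at hb hc hbc hac hdb heq
    simp only [Subtype.mk.injEq, Prod.mk.injEq]
    refine Subtype.ext (Prod.ext ?_ (Prod.ext ?_ (Prod.ext ?_ ?_))) <;> dsimp only <;> omega

lemma multiset_two_decomp {M : Multiset ℕ} {s t : ℕ} (hst : s ≠ t)
    (h : M.toFinset = {s, t}) :
    M = Multiset.replicate (M.count s) s + Multiset.replicate (M.count t) t := by
  ext x
  simp only [Multiset.count_add, Multiset.count_replicate]
  by_cases hs : x = s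
  · subst hs; simp [hst.symm]
  · by_cases ht : x = t
    · subst ht; simp [Ne.symm hs]
    · have hx : x ∉ M.toFinset := by
        rw [h]; simp [Ne.symm hs, Ne.symm ht]
        omega
      rw [Multiset.mem_toFinset] at hx
      simp [Multiset.count_eq_zero_of_notMem hx, Ne.symm hs, Ne.symm ht]

def npart (D : ℕ) (m n s t : ℕ) (h : (m, n, s, t) ∈ NS D) : Nat.Partition D where
  parts := Multiset.replicate m s + Multiset.replicate n t
  parts_pos := by
    obtain ⟨hm, hn, hts, ht, hsum⟩ := h
    dsimp only at hm hn hts ht hsum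
    intro x hx
    rcases Multiset.mem_add.1 hx with h' | h' <;>
      rw [Multiset.eq_of_mem_replicate h'] <;> omega
  parts_sum := by
    obtain ⟨hm, hn, hts, ht, hsum⟩ := h
    dsimp only at hm hn hts ht hsum
    simp [Multiset.sum_replicate, smul_eq_mul]
    exact hsum

lemma npart_card (D : ℕ) (m n s t : ℕ) (h : (m, n, s, t) ∈ NS D) :
    (npart D m n s t h).parts.toFinset.card = 2 := by
  have hm := h.1
  have hts := h.2.2.1
  have ht := h.2.2.2.1
  have hn := h.2.1
  dsimp only [NS, Set.mem_setOf_eq] at hm hn hts ht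
  have : (npart D m n s t h).parts.toFinset = {s, t} := by
    simp only [npart, Multiset.toFinset_add, Multiset.toFinset_replicate,
      if_neg (by omega : ¬ m = 0), if_neg (by omega : ¬ n = 0)]
    ext x; simp
  rw [this, Finset.card_pair (by omega)]

lemma npart_toFinset (D : ℕ) (m n s t : ℕ) (h : (m, n, s, t) ∈ NS D) :
    (npart D m n s t h).parts.toFinset = {s, t} := by
  have hm := h.1
  have hn := h.2.1
  dsimp only [NS, Set.mem_setOf_eq] at hm hn
  simp only [npart, Multiset.toFinset_add, Multiset.toFinset_replicate,
    if_neg (by omega : ¬ m = 0), if_neg (by omega : ¬ n = 0)]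
  ext x; simp

lemma pair_eq {s t s' t' : ℕ} (h1 : t < s) (h2 : t' < s')
    (h : ({s, t} : Finset ℕ) = {s', t'}) : s = s' ∧ t = t' := by
  have e1 : s ∈ ({s', t'} : Finset ℕ) := h ▸ (by simp)
  have e2 : t ∈ ({s', t'} : Finset ℕ) := h ▸ (by simp)
  have e3 : s' ∈ ({s, t} : Finset ℕ) := h ▸ (by simp)
  have e4 : t' ∈ ({s, t} : Finset ℕ) := h ▸ (by simp)
  simp only [Finset.mem_insert, Finset.mem_singleton] at e1 e2 e3 e4
  omega

lemma count_npart (m n s t x : ℕ) :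
    (Multiset.replicate m s + Multiset.replicate n t).count x =
      (if s = x then m else 0) + (if t = x then n else 0) := by
  simp [Multiset.count_replicate]

noncomputable def partEquiv (D : ℕ) :
    NS D ≃ {p : Nat.Partition D // p.parts.toFinset.card = 2} := by
  apply Equiv.ofBijective
    (fun r => ⟨npart D r.1.1 r.1.2.1 r.1.2.2.1 r.1.2.2.2
      (by obtain ⟨⟨m, n, s, t⟩, h⟩ := r; exact h),
      by obtain ⟨⟨m, n, s, t⟩, h⟩ := r; exact npart_card D m n s t h⟩)
  constructor
  · rintro ⟨⟨m, n, s, t⟩, h⟩ ⟨⟨m', n', s', t'⟩, h'⟩ heq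
    simp only [Subtype.mk.injEq] at heq
    have hparts : (npart D m n s t h).parts = (npart D m' n' s' t' h').parts := by rw [heq]
    have hfin : ({s, t} : Finset ℕ) = {s', t'} := by
      rw [← npart_toFinset D m n s t h, ← npart_toFinset D m' n' s' t' h', hparts]
    obtain ⟨rfl, rfl⟩ := pair_eq h.2.2.1 h'.2.2.1 hfin
    have hts : t < s := h.2.2.1
    have hcs := congrArg (Multiset.count s) hparts
    have hct := congrArg (Multiset.count t) hparts
    simp [npart, Multiset.count_replicate, show ¬ t = s by omega, show ¬ s = t by omega] at hcs hct
    simp only [Subtype.mk.injEq, Prod.mk.injEq]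
    exact ⟨hcs, hct, trivial⟩
  · rintro ⟨p, hp⟩
    obtain ⟨a, b, hab, hfin⟩ := Finset.card_eq_two.1 hp
    set s := max a b with hs
    set t := min a b with htdef
    have hts : t < s := by simp [hs, htdef]; omega
    have hfin' : p.parts.toFinset = {s, t} := by
      rw [hfin]
      rcases max_cases a b with ⟨h1, h2⟩ | ⟨h1, h2⟩ <;>
        rcases min_cases a b with ⟨h3, h4⟩ | ⟨h3, h4⟩ <;>
        simp [hs, htdef, h1, h3, Finset.pair_comm] <;> omega
    have hsmem : s ∈ p.parts := by rw [← Multiset.mem_toFinset, hfin']; simp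
    have htmem : t ∈ p.parts := by rw [← Multiset.mem_toFinset, hfin']; simp
    have hdec := multiset_two_decomp (by omega : s ≠ t) hfin'
    set m := p.parts.count s with hm
    set n := p.parts.count t with hn
    have hmem : (m, n, s, t) ∈ NS D := by
      refine ⟨Multiset.one_le_count_iff_mem.2 hsmem, Multiset.one_le_count_iff_mem.2 htmem,
        hts, p.parts_pos htmem, ?_⟩
      have := p.parts_sum
      rw [hdec] at this
      simpa [Multiset.sum_replicate, smul_eq_mul] using this
    refine ⟨⟨(m, n, s, t), hmem⟩, ?_⟩
    apply Subtype.ext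
    apply Nat.Partition.ext
    exact hdec.symm


theorem stmt_1 (D : ℕ) (hD : 0 < D) :
    Set.ncard {q : ℤ × ℤ × ℤ × ℤ |
      1 ≤ q.2.1 ∧ 1 ≤ q.2.2.1 ∧ q.2.1 + q.2.2.1 < D ∧ q.1 > q.2.2.1 ∧ q.2.2.2 > q.2.1 ∧
      q.1 * q.2.2.2 = D + q.2.1 * q.2.2.1} = nuTwo D := by
  have h1 : Set.ncard (QS D) = Nat.card (QS D) := (Nat.card_coe_set_eq _).symm
  have h2 : Nat.card (QS D) = Nat.card (NS D) := Nat.card_congr (nqEquiv D).symm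
  have h3 : Nat.card (NS D) =
      Nat.card {p : Nat.Partition D // p.parts.toFinset.card = 2} :=
    Nat.card_congr (partEquiv D)
  have h4 : Nat.card {p : Nat.Partition D // p.parts.toFinset.card = 2} = nuTwo D := by
    rw [Nat.card_eq_fintype_card, Fintype.card_subtype]
    rfl
  show Set.ncard (QS D) = nuTwo D
  rw [h1, h2, h3, h4]
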